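/- The matching 3K₂ (the disjoint union of three edges) has lettericity exactly 3; in particular, 3K₂ has no 2-lettering. -/

import Mathlib

/-- A `k`-lettering of a graph `G`: a decoder `D ⊆ Fin k × Fin k`, a letter
assignment `L`, and an injective ordering `ord` such that for `ord u < ord v`,
`u` and `v` are adjacent iff `(L u, L v) ∈ D`. -/
def HasLettering {V : Type*} (G : SimpleGraph V) (k : ℕ) : Prop :=
  ∃ (D : Set (Fin k × Fin k)) (L : V → Fin k) (ord : V → ℕ),
    Function.Injective ord ∧
    ∀ u v : V, u ≠ v → ord u < ord v → (G.Adj u v ↔ (L u, L v) ∈ D)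

/-- The lettericity of a graph: the least `k` such that it has a `k`-lettering. -/
noncomputable def lettericity {V : Type*} (G : SimpleGraph V) : ℕ :=
  sInf {k | HasLettering G k}

/-- The matching `mK₂`: the disjoint union of `m` single edges. -/
def matchingGraph (m : ℕ) : SimpleGraph (Fin m × Fin 2) where
  Adj a b := a.1 = b.1 ∧ a.2 ≠ b.2
  symm := by constructor; rintro a b ⟨h1, h2⟩; exact ⟨h1.symm, h2.symm⟩
  loopless := by constructor; rintro a ⟨h1, h2⟩; exact h2 rfl

lemma fin2ne : ∀ b d : Fin 2, b ≠ d ↔ d = b + 1 := by decide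

lemma fin2ne' : ∀ b : Fin 2, b ≠ b + 1 := by decide

lemma no2aux : ∀ (Db : Fin 2 → Fin 2 → Bool) (w : Fin 6 → Fin 2),
    ¬ (∀ i : Fin 6, (Finset.univ.filter
      (fun j => i ≠ j ∧ (if i < j then Db (w i) (w j) else Db (w j) (w i)) = true)).card = 1) := by
  decide

lemma hasLettering_mono {V : Type*} (G : SimpleGraph V) {k k' : ℕ} (hkk : k ≤ k') :
    HasLettering G k → HasLettering G k' := by
  rintro ⟨D, L, ord, hinj, h⟩
  refine ⟨(fun p => (Fin.castLE hkk p.1, Fin.castLE hkk p.2)) '' D,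
    fun v => Fin.castLE hkk (L v), ord, hinj, ?_⟩
  intro u v hne hlt
  rw [h u v hne hlt]
  constructor
  · intro hm; exact ⟨(L u, L v), hm, rfl⟩
  · rintro ⟨⟨a, b⟩, hm, heq⟩
    obtain ⟨h1, h2⟩ := Prod.mk.injEq .. ▸ heq
    rwa [← Fin.castLE_injective hkk h1, ← Fin.castLE_injective hkk h2]

lemma no2 : ¬ HasLettering (matchingGraph 3) 2 := by
  rintro ⟨D, L, ord, hinj, h⟩
  -- sorted enumeration of the 6 vertices
  set s : Finset ℕ := Finset.univ.image ord with hs_def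
  have hs : s.card = 6 := by
    rw [hs_def, Finset.card_image_of_injective _ hinj, Finset.card_univ]
    simp
  set g := s.orderIsoOfFin hs with hg_def
  have hex : ∀ i : Fin 6, ∃ v : Fin 3 × Fin 2, ord v = (g i : ℕ) := by
    intro i
    obtain ⟨v, -, hv⟩ := Finset.mem_image.mp (g i).2
    exact ⟨v, hv⟩
  choose e he using hex
  have heinj : Function.Injective e := by
    intro i j hij
    have : (g i : ℕ) = (g j : ℕ) := by rw [← he, ← he, hij]
    exact g.injective (Subtype.coe_injective this)
  have hmono : ∀ i j : Fin 6, i < j → ord (e i) < ord (e j) := by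
    intro i j hij
    rw [he, he]
    exact_mod_cast g.strictMono hij
  have hebij : Function.Bijective e :=
    (Fintype.bijective_iff_injective_and_card e).mpr ⟨heinj, by simp⟩
  classical
  set Db : Fin 2 → Fin 2 → Bool := fun a b => decide ((a, b) ∈ D) with hDb_def
  have hDb : ∀ a b, Db a b = true ↔ (a, b) ∈ D := by
    intro a b; simp [hDb_def]
  set w : Fin 6 → Fin 2 := fun i => L (e i) with hw_def
  -- the if-condition encodes adjacency
  have hadj : ∀ i j : Fin 6, i ≠ j →
      ((if i < j then Db (w i) (w j) else Db (w j) (w i)) = true ↔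
        (matchingGraph 3).Adj (e i) (e j)) := by
    intro i j hij
    have hne : e i ≠ e j := fun hc => hij (heinj hc)
    rcases lt_or_gt_of_ne hij with hlt | hgt
    · rw [if_pos hlt, hDb, ← h (e i) (e j) hne (hmono i j hlt)]
    · rw [if_neg (by omega), hDb, ← h (e j) (e i) hne.symm (hmono j i hgt)]
      exact ⟨fun ha => ha.symm, fun ha => ha.symm⟩
  -- each vertex has a unique partner
  have hpartner : ∀ v : Fin 3 × Fin 2, ∀ u : Fin 3 × Fin 2,
      (matchingGraph 3).Adj v u ↔ u = (v.1, v.2 + 1) := by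
    rintro ⟨a, b⟩ ⟨c, d⟩
    show (a = c ∧ b ≠ d) ↔ _
    rw [Prod.mk.injEq]
    constructor
    · rintro ⟨rfl, hbd⟩
      exact ⟨rfl, (fin2ne b d).mp hbd⟩
    · rintro ⟨rfl, rfl⟩
      exact ⟨rfl, fin2ne' b⟩
  apply no2aux Db w
  intro i
  obtain ⟨j0, hj0⟩ := hebij.2 ((e i).1, (e i).2 + 1)
  rw [Finset.card_eq_one]
  refine ⟨j0, ?_⟩
  have hj0ne : i ≠ j0 := by
    intro hc
    rw [← hc] at hj0
    exact fin2ne' (e i).2 (congrArg Prod.snd hj0)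
  ext j
  simp only [Finset.mem_filter, Finset.mem_univ, true_and, Finset.mem_singleton]
  constructor
  · rintro ⟨hij, hcond⟩
    have := (hadj i j hij).mp hcond
    have := (hpartner (e i) (e j)).mp this
    exact heinj (by rw [this, hj0])
  · intro hj
    rw [hj]
    exact ⟨hj0ne, (hadj i j0 hj0ne).mpr (by rw [hpartner, hj0])⟩

/-- The matching `3K₂` has lettericity exactly `3`; in particular it has no
`2`-lettering. -/
theorem lettericity_three_matching :
    lettericity (matchingGraph 3) = 3 ∧ ¬ HasLettering (matchingGraph 3) 2 := by
  have h3 : HasLettering (matchingGraph 3) 3 := by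
    refine ⟨{p | p.1 = p.2}, fun v => v.1, fun v => v.1 * 2 + v.2, ?_, ?_⟩
    · intro u v huv
      simp only at huv
      have := u.1.isLt; have := u.2.isLt; have := v.1.isLt; have := v.2.isLt
      ext <;> [skip; skip] <;> omega
    · intro u v hne _
      constructor
      · rintro ⟨h1, -⟩; exact h1
      · intro h1
        refine ⟨h1, fun h2 => hne ?_⟩
        exact Prod.ext h1 h2
  refine ⟨?_, no2⟩
  have hmem : 3 ∈ {k | HasLettering (matchingGraph 3) k} := h3
  apply le_antisymm (Nat.sInf_le hmem)
  apply le_csInf ⟨3, hmem⟩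
  intro b hb
  by_contra hlt
  exact no2 (hasLettering_mono _ (by omega) hb)
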